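/- arXiv:1703.07594 — 2 statements merged into one kernel-verified Lean document; each statement's English description precedes it below -/
import Mathlib

section
/- Suppose u, m : [0,∞) → ℝ extend to smooth radially symmetric functions on ℝ^d (so in particular u'(0) = 0), m is positive, and the pair solves the radial first-order MFG system: u'(r)²/(2 m(r)^α) + V(r) = m(r)^β + H and the radial Fokker–Planck equation on [0,∞). Then u is constant and m(r) = (V(r) - H)^(1/β) for all r ≥ 0. -/
open Real Set Filter Topology

theorem smooth_radial_solutions_whole_space
    (d : ℕ) (hd : 2 ≤ d) (α β H : ℝ) (hα0 : 0 ≤ α) (hα2 : α < 2) (hβ : 0 < β)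
    (V u m : ℝ → ℝ)
    (hu : ∀ r ≥ (0:ℝ), DifferentiableAt ℝ u r)
    (hu' : ∀ r ≥ (0:ℝ), DifferentiableAt ℝ (deriv u) r)
    (hm : ∀ r ≥ (0:ℝ), DifferentiableAt ℝ m r)
    (hu0 : deriv u 0 = 0)
    (hmpos : ∀ r ≥ (0:ℝ), 0 < m r)
    (hHJ : ∀ r ≥ (0:ℝ),
      (deriv u r) ^ 2 / (2 * m r ^ α) + V r = m r ^ β + H)
    (hFP : ∀ r > (0:ℝ),
      (1 - α) * deriv m r * deriv u r
        + m r * (deriv (deriv u) r + ((d:ℝ) - 1) / r * deriv u r) = 0) :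
    (∀ r ≥ (0:ℝ), u r = u 0) ∧
    (∀ r ≥ (0:ℝ), m r = (V r - H) ^ (1 / β)) := by
  obtain ⟨n, rfl⟩ : ∃ n, d = n + 2 := ⟨d - 2, by omega⟩
  set w := deriv u with hw
  set g : ℝ → ℝ := fun s => m s ^ (1 - α) * (s ^ (n+1) * w s) with hg
  have hgd : ∀ r > (0:ℝ), HasDerivAt g 0 r := by
    intro r hr
    have hmr := hmpos r hr.le
    have hA : HasDerivAt (fun s => m s ^ (1-α)) (deriv m r * (1-α) * m r ^ (1-α-1)) r :=
      ((hm r hr.le).hasDerivAt).rpow_const (Or.inl hmr.ne')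
    have hB : HasDerivAt (fun s : ℝ => s ^ (n+1)) (((n:ℝ)+1) * r ^ n) r := by
      simpa using hasDerivAt_pow (n+1) r
    have hC : HasDerivAt w (deriv w r) r := (hu' r hr.le).hasDerivAt
    have h := hA.mul (hB.mul hC)
    refine h.congr_deriv (Eq.symm ?_)
    have hfp := hFP r hr
    have hK : m r ^ (1-α-1) * m r = m r ^ (1-α) := by
      rw [← Real.rpow_add_one hmr.ne', show (1-α-1)+1 = 1-α by ring]
    rw [← hK]
    simp only [Pi.mul_apply]
    push_cast at hfp ⊢
    field_simp at hfp
    linear_combination (-(m r ^ (1-α-1)) * r ^ n) * hfp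
  have hg0 : Tendsto g (𝓝[>] 0) (𝓝 0) := by
    have hc : ContinuousAt g 0 := by
      have h1 : ContinuousAt (fun s => m s ^ (1-α)) 0 :=
        ((hm 0 le_rfl).continuousAt).rpow_const (Or.inl (hmpos 0 le_rfl).ne')
      exact h1.mul (((continuous_pow (n+1)).continuousAt).mul (hu' 0 le_rfl).continuousAt)
    have hg00 : g 0 = 0 := by simp [hg]
    simpa [hg00] using hc.continuousWithinAt.tendsto
  have hgzero : ∀ r > (0:ℝ), g r = 0 := by
    intro r hr
    have hconst : ∀ ε ∈ Ioo (0:ℝ) r, g ε = g r := by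
      intro ε hε
      have key := constant_of_has_deriv_right_zero (f := g) (a := ε) (b := r)
        (fun x hx => ((hgd x (lt_of_lt_of_le hε.1 hx.1)).continuousAt.continuousWithinAt))
        (fun x hx => ((hgd x (lt_of_lt_of_le hε.1 hx.1)).hasDerivWithinAt))
      have := key r ⟨hε.2.le, le_rfl⟩
      linarith [this]
    have h1 : Tendsto g (𝓝[>] (0:ℝ)) (𝓝 (g r)) := by
      have he : g =ᶠ[𝓝[>] (0:ℝ)] fun _ => g r := by
        filter_upwards [Ioo_mem_nhdsGT_of_mem (by exact ⟨le_rfl, hr⟩ : (0:ℝ) ∈ Ico 0 r)]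
          with x hx using hconst x hx
      exact Tendsto.congr' he.symm tendsto_const_nhds
    exact tendsto_nhds_unique h1 hg0
  have hwzero : ∀ r ≥ (0:ℝ), w r = 0 := by
    intro r hr
    rcases eq_or_lt_of_le hr with h | h
    · rw [← h]; exact hu0
    · have h0 : m r ^ (1-α) * (r ^ (n+1) * w r) = 0 := hgzero r h
      have hA : (0:ℝ) < m r ^ (1-α) := Real.rpow_pos_of_pos (hmpos r hr) _
      have hB : (0:ℝ) < r ^ (n+1) := pow_pos h _
      rcases mul_eq_zero.mp h0 with h1 | h1
      · exact absurd h1 hA.ne'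
      · rcases mul_eq_zero.mp h1 with h2 | h2
        · exact absurd h2 hB.ne'
        · exact h2
  have hmform : ∀ r ≥ (0:ℝ), m r = (V r - H) ^ (1/β) := by
    intro r hr
    have h := hHJ r hr
    rw [hwzero r hr] at h
    have hVH : V r - H = m r ^ β := by
      have h0 : (0:ℝ)^2 / (2 * m r ^ α) = 0 := by simp
      linarith [h, h0]
    rw [hVH, ← Real.rpow_mul (hmpos r hr).le, mul_one_div, div_self hβ.ne', Real.rpow_one]
  refine ⟨?_, hmform⟩
  intro r hr
  have key := constant_of_has_deriv_right_zero (f := u) (a := 0) (b := r)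
    (fun x hx => (hu x hx.1).continuousAt.continuousWithinAt)
    (fun x hx => by
      have h1 := ((hu x hx.1).hasDerivAt).hasDerivWithinAt (s := Ici x)
      have h2 : deriv u x = 0 := hwzero x hx.1
      rwa [h2] at h1)
  exact key r ⟨hr, le_rfl⟩
end

section
/- Assume 2/d < α < min(2, 2/d + β), j ≠ 0, and V continuous on (0,∞) with V(r) r^σ → 0 as r → 0⁺ and as r → ∞, where σ = 2β(d-1)/(2+β-α). Then for every H > 0, the integral ∫₀^∞ r^((d-1)(β-α)/(2+β-α)) [F_j^{-1}((H - V(r)) r^σ)]^(1/β) dr is finite, where F_j(t) = (j²/2)t^((α-2)/β) - t is the decreasing bijection (0,∞) → ℝ. -/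
set_option maxHeartbeats 1000000


open Real MeasureTheory Filter

theorem phi_finite
    (d : ℕ) (hd : 2 ≤ d) (α β j : ℝ) (hβ : 0 < β)
    (hαl : 2 / (d:ℝ) < α) (hαu : α < min 2 (2 / (d:ℝ) + β)) (hj : j ≠ 0)
    (V : ℝ → ℝ) (hV : ContinuousOn V (Set.Ioi 0))
    (hV0 : Tendsto (fun r => V r * r ^ (2 * β * ((d:ℝ) - 1) / (2 + β - α)))
      (nhdsWithin 0 (Set.Ioi 0)) (nhds 0))
    (hVinf : Tendsto (fun r => V r * r ^ (2 * β * ((d:ℝ) - 1) / (2 + β - α)))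
      atTop (nhds 0))
    (Finv : ℝ → ℝ)
    (hFinv_pos : ∀ y : ℝ, 0 < Finv y)
    (hFinv_left : ∀ t > (0:ℝ), Finv (j ^ 2 / 2 * t ^ ((α - 2) / β) - t) = t)
    (hFinv_right : ∀ y : ℝ, j ^ 2 / 2 * (Finv y) ^ ((α - 2) / β) - Finv y = y) :
    ∀ H > (0:ℝ), IntegrableOn
      (fun r => r ^ (((d:ℝ) - 1) * (β - α) / (2 + β - α)) *
        (Finv ((H - V r) * r ^ (2 * β * ((d:ℝ) - 1) / (2 + β - α)))) ^ (1 / β))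
      (Set.Ioi 0) := by
  intro H hH
  have hd2 : (2:ℝ) ≤ (d:ℝ) := by exact_mod_cast hd
  have hdpos : (0:ℝ) < (d:ℝ) := by linarith
  have hα2 : α < 2 := lt_of_lt_of_le hαu (min_le_left _ _)
  have hαβ : α < 2 / (d:ℝ) + β := lt_of_lt_of_le hαu (min_le_right _ _)
  have hα0 : 0 < α := lt_trans (by positivity) hαl
  have hden : (0:ℝ) < 2 + β - α := by linarith
  have hj2 : (0:ℝ) < j ^ 2 := by positivity
  set σ := 2 * β * ((d:ℝ) - 1) / (2 + β - α) with hσdef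
  set p := ((d:ℝ) - 1) * (β - α) / (2 + β - α) with hpdef
  have hσ0 : 0 ≤ σ := by
    apply div_nonneg _ hden.le
    have : (1:ℝ) ≤ (d:ℝ) := by linarith
    nlinarith
  have hdα : 2 < (d:ℝ) * α := by
    rw [div_lt_iff₀ hdpos] at hαl; linarith [hαl]
  have hdβ : (d:ℝ) * α < 2 + (d:ℝ) * β := by
    have h := mul_lt_mul_of_pos_right hαβ hdpos
    have h2 : 2 / (d:ℝ) * (d:ℝ) = 2 := div_mul_cancel₀ 2 hdpos.ne'
    nlinarith
  have hp1 : (-1:ℝ) < p := by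
    rw [hpdef, lt_div_iff₀ hden]; nlinarith
  set q := (α - 2) / β with hqdef
  have hq0 : q < 0 := div_neg_of_neg_of_pos (by linarith) hβ
  -- Finv is antitone
  have hanti : Antitone Finv := by
    intro y z hyz
    by_contra hc
    push_neg at hc
    have hlt : (Finv z) ^ q < (Finv y) ^ q :=
      Real.rpow_lt_rpow_of_neg (hFinv_pos y) hc hq0
    have h2 : j ^ 2 / 2 * (Finv z) ^ q < j ^ 2 / 2 * (Finv y) ^ q :=
      mul_lt_mul_of_pos_left hlt (by positivity)
    have h3 : j ^ 2 / 2 * (Finv z) ^ q - Finv z < j ^ 2 / 2 * (Finv y) ^ q - Finv y := by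
      linarith
    rw [hFinv_right z, hFinv_right y] at h3
    exact absurd hyz (not_le.mpr h3)
  -- small-r control
  have hball : ∀ᶠ r in nhdsWithin 0 (Set.Ioi 0), |V r * r ^ σ| < 1 := by
    have h := hV0 (Metric.ball_mem_nhds (0:ℝ) one_pos)
    filter_upwards [h] with r hr
    have h2 : dist (V r * r ^ σ) 0 < 1 := hr
    rwa [Real.dist_eq, sub_zero] at h2
  obtain ⟨ε, hεmem, hεsub⟩ := mem_nhdsGT_iff_exists_Ioo_subset.mp hball
  have hεpos : (0:ℝ) < ε := hεmem
  -- large-r control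
  have hRfar : ∀ᶠ r in atTop, |V r * r ^ σ| ≤ H / 2 := by
    have h := hVinf (Metric.ball_mem_nhds (0:ℝ) (by positivity : (0:ℝ) < H / 2))
    filter_upwards [h] with r hr
    have h2 := Metric.mem_ball.mp hr
    rw [Real.dist_eq, sub_zero] at h2
    exact h2.le
  obtain ⟨R0, hR0⟩ := eventually_atTop.mp hRfar
  set R := max R0 1 with hRdef
  have hR1 : (1:ℝ) ≤ R := le_max_right _ _
  have hRpos : (0:ℝ) < R := lt_of_lt_of_le one_pos hR1
  set c := ε / 2 with hcdef
  have hcpos : 0 < c := by positivity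
  have hgc : ContinuousOn (fun r => (H - V r) * r ^ σ) (Set.Icc c R) := by
    have hsub : Set.Icc c R ⊆ Set.Ioi 0 := fun x hx => lt_of_lt_of_le hcpos hx.1
    exact (continuousOn_const.sub (hV.mono hsub)).mul
      (continuousOn_id.rpow_const fun x hx => Or.inl (ne_of_gt (hsub hx)))
  set m := sInf ((fun r => (H - V r) * r ^ σ) '' Set.Icc c R) with hmdef
  set yb := min (-1) m with hybdef
  have hlow : ∀ r ∈ Set.Ioc (0:ℝ) R, yb ≤ (H - V r) * r ^ σ := by
    intro r hr
    rcases lt_or_ge r ε with h | h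
    · have hmem : |V r * r ^ σ| < 1 := hεsub ⟨hr.1, h⟩
      have habs := (abs_lt.mp hmem).2
      have hrσ : 0 ≤ r ^ σ := Real.rpow_nonneg hr.1.le σ
      have h1 : -1 ≤ (H - V r) * r ^ σ := by nlinarith [mul_nonneg hH.le hrσ]
      exact le_trans (min_le_left _ _) h1
    · have hrIcc : r ∈ Set.Icc c R := ⟨by rw [hcdef]; linarith, hr.2⟩
      have hbdd : BddBelow ((fun r => (H - V r) * r ^ σ) '' Set.Icc c R) :=
        (isCompact_Icc.image_of_continuousOn hgc).bddBelow
      exact le_trans (min_le_right _ _) (csInf_le hbdd ⟨r, hrIcc, rfl⟩)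
  -- measurability
  have haesm : ∀ s : Set ℝ, MeasurableSet s → s ⊆ Set.Ioi 0 →
      AEStronglyMeasurable (fun r => r ^ p * (Finv ((H - V r) * r ^ σ)) ^ (1 / β))
        (volume.restrict s) := by
    intro s hs hsub
    have hg : AEMeasurable (fun r => (H - V r) * r ^ σ) (volume.restrict s) := by
      apply ContinuousOn.aemeasurable _ hs
      exact (continuousOn_const.sub (hV.mono hsub)).mul
        (continuousOn_id.rpow_const fun x hx => Or.inl (ne_of_gt (hsub hx)))
    have hrpm : AEMeasurable (fun r : ℝ => r ^ p) (volume.restrict s) :=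
      ContinuousOn.aemeasurable
        (continuousOn_id.rpow_const fun x hx => Or.inl (ne_of_gt (hsub hx))) hs
    have hcont : Continuous (fun x : ℝ => x ^ (1 / β)) :=
      Real.continuous_rpow_const (by positivity)
    have h1 : AEMeasurable (fun r => (Finv ((H - V r) * r ^ σ)) ^ (1 / β))
        (volume.restrict s) :=
      ((hcont.measurable.comp hanti.measurable)).comp_aemeasurable hg
    exact (hrpm.mul h1).aestronglyMeasurable
  -- integrable near 0 (on Ioc 0 R)
  have hInt1 : IntegrableOn
      (fun r => r ^ p * (Finv ((H - V r) * r ^ σ)) ^ (1 / β)) (Set.Ioc 0 R) := by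
    have hdom : IntegrableOn (fun r => (Finv yb) ^ (1 / β) * r ^ p) (Set.Ioc 0 R) := by
      have h := (intervalIntegral.intervalIntegrable_rpow' (a := 0) (b := R) hp1).1
      exact h.const_mul _
    apply Integrable.mono' hdom (haesm _ measurableSet_Ioc Set.Ioc_subset_Ioi_self)
    filter_upwards [ae_restrict_mem measurableSet_Ioc] with r hr
    have hrpos : 0 < r := hr.1
    have hF := hFinv_pos ((H - V r) * r ^ σ)
    have hrp : 0 ≤ r ^ p := Real.rpow_nonneg hrpos.le p
    rw [Real.norm_of_nonneg (mul_nonneg hrp (Real.rpow_nonneg hF.le _))]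
    have h1 : Finv ((H - V r) * r ^ σ) ≤ Finv yb := hanti (hlow r hr)
    have h2 : (Finv ((H - V r) * r ^ σ)) ^ (1 / β) ≤ (Finv yb) ^ (1 / β) :=
      Real.rpow_le_rpow hF.le h1 (by positivity)
    calc r ^ p * (Finv ((H - V r) * r ^ σ)) ^ (1 / β)
        ≤ r ^ p * (Finv yb) ^ (1 / β) := mul_le_mul_of_nonneg_left h2 hrp
      _ = (Finv yb) ^ (1 / β) * r ^ p := mul_comm _ _
  -- exponent for the tail
  have hα2ne : (α - 2) ≠ 0 := by intro h; linarith [hα2]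
  have h2α : (0:ℝ) < 2 - α := by linarith
  have hexp_lt : p + σ / (α - 2) < -1 := by
    have key : p + σ / (α - 2) = -(((d:ℝ) - 1) * α / (2 - α)) := by
      rw [hpdef, hσdef]
      field_simp
      ring
    have hX : 1 < ((d:ℝ) - 1) * α / (2 - α) := by
      rw [lt_div_iff₀ h2α]; nlinarith
    rw [key]; linarith
  -- integrable on the tail
  have hInt2 : IntegrableOn
      (fun r => r ^ p * (Finv ((H - V r) * r ^ σ)) ^ (1 / β)) (Set.Ioi R) := by
    set w := 1 / (α - 2) with hwdef
    set C := (H / j ^ 2) ^ w with hCdef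
    have hdom : IntegrableOn (fun r => C * r ^ (p + σ / (α - 2))) (Set.Ioi R) :=
      (integrableOn_Ioi_rpow_of_lt hexp_lt hRpos).const_mul _
    apply Integrable.mono' hdom (haesm _ measurableSet_Ioi
      (fun x hx => lt_trans hRpos hx))
    filter_upwards [ae_restrict_mem measurableSet_Ioi] with r hr
    have hrR : R < r := hr
    have hrpos : 0 < r := lt_trans hRpos hrR
    have hr1 : (1:ℝ) ≤ r := le_trans hR1 hrR.le
    have hVr : |V r * r ^ σ| ≤ H / 2 :=
      hR0 r (le_trans (le_max_left R0 1) hrR.le)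
    have hrσ1 : (1:ℝ) ≤ r ^ σ := Real.one_le_rpow hr1 hσ0
    have hrσ : 0 < r ^ σ := lt_of_lt_of_le one_pos hrσ1
    have hglow : H / 2 * r ^ σ ≤ (H - V r) * r ^ σ := by
      have habs := (abs_le.mp hVr).2
      nlinarith [mul_le_mul_of_nonneg_left hrσ1 (le_of_lt (half_pos hH))]
    set t := Finv ((H - V r) * r ^ σ) with htdef
    have ht0 : 0 < t := hFinv_pos _
    have hteq := hFinv_right ((H - V r) * r ^ σ)
    -- j^2/2 * t^q - t = g r ≥ H/2 * r^σ, hence t^q ≥ (H/j^2) * r^σ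
    have hA : 0 < H / j ^ 2 * r ^ σ := by positivity
    have htq : H / j ^ 2 * r ^ σ ≤ t ^ q := by
      have h5 : H / 2 * r ^ σ ≤ j ^ 2 / 2 * t ^ q := by
        rw [← htdef] at hteq
        nlinarith [hteq, ht0, hglow]
      rw [div_mul_eq_mul_div, div_le_iff₀ hj2]
      nlinarith [h5]
    have hw0 : w ≤ 0 := by
      rw [hwdef]
      apply le_of_lt
      exact one_div_neg.mpr (by linarith)
    have h6 : (t ^ q) ^ w ≤ (H / j ^ 2 * r ^ σ) ^ w :=
      Real.rpow_le_rpow_of_nonpos hA htq hw0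
    have h7 : (t ^ q) ^ w = t ^ (1 / β) := by
      rw [← Real.rpow_mul ht0.le]
      congr 1
      rw [hqdef, hwdef]
      field_simp
    have h8 : (H / j ^ 2 * r ^ σ) ^ w = C * r ^ (σ / (α - 2)) := by
      rw [Real.mul_rpow (by positivity) (Real.rpow_nonneg hrpos.le σ)]
      rw [hCdef]
      congr 1
      rw [← Real.rpow_mul hrpos.le, hwdef, mul_one_div]
    have h9 : t ^ (1 / β) ≤ C * r ^ (σ / (α - 2)) := by
      rw [← h7, ← h8]; exact h6
    have hrp : 0 ≤ r ^ p := Real.rpow_nonneg hrpos.le p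
    rw [Real.norm_of_nonneg (mul_nonneg hrp (Real.rpow_nonneg ht0.le _))]
    calc r ^ p * t ^ (1 / β) ≤ r ^ p * (C * r ^ (σ / (α - 2))) :=
          mul_le_mul_of_nonneg_left h9 hrp
      _ = C * (r ^ p * r ^ (σ / (α - 2))) := by ring
      _ = C * r ^ (p + σ / (α - 2)) := by rw [← Real.rpow_add hrpos]
  have := hInt1.union hInt2
  rwa [Set.Ioc_union_Ioi_eq_Ioi hRpos.le] at this
end
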